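/- arXiv:2505.05792 — 2 statements merged into one kernel-verified Lean document; each statement's English description precedes it below -/
import Mathlib

section
/- For all natural numbers m, n ≥ 1, the function C_{m,n}(θ) = Σ_k binom(m, n+k) binom(m, n−k) cos(kθ) satisfies the second-order differential identity C''_{m,n}(θ) = m² C_{m−1,n−1}(θ) − n² C_{m,n}(θ) for all real θ. -/
/-- Binomial coefficient `choose m j` extended to integer lower index, with the
convention that it vanishes for `j < 0` (and automatically for `j > m`). -/
def ch (m : ℕ) (j : ℤ) : ℕ := if 0 ≤ j then m.choose j.toNat else 0

/-- The function `C_{m,n}(θ) = Σ_k binom(m,n+k) binom(m,n−k) cos(kθ)`,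
the sum taken over all integers `k` (only `|k| ≤ m` contributes). -/
noncomputable def Cfun (m n : ℕ) : ℝ → ℝ := fun θ =>
  ∑ k ∈ Finset.Icc (-(m : ℤ)) (m : ℤ),
    ((ch m ((n : ℤ) + k) * ch m ((n : ℤ) - k) : ℕ) : ℝ) * Real.cos (k * θ)

lemma ch_eq_zero_of_neg {m : ℕ} {j : ℤ} (h : j < 0) : ch m j = 0 := by
  simp [ch, not_le.mpr h]

lemma ch_eq_zero_of_gt {m : ℕ} {j : ℤ} (h : (m : ℤ) < j) : ch m j = 0 := by
  have h0 : 0 ≤ j := le_of_lt (lt_of_le_of_lt (Int.ofNat_nonneg m) h)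
  have : m < j.toNat := by omega
  simp [ch, h0, Nat.choose_eq_zero_of_lt this]

/-- Key identity: `j * C(m,j) = m * C(m-1, j-1)` over ℤ. -/
lemma key (m : ℕ) (hm : 1 ≤ m) (j : ℤ) :
    j * (ch m j : ℤ) = (m : ℤ) * (ch (m - 1) (j - 1) : ℤ) := by
  rcases lt_or_ge j 0 with h | h
  · rw [ch_eq_zero_of_neg h, ch_eq_zero_of_neg (by omega)]
    simp
  · rcases eq_or_lt_of_le h with h0 | h0
    · rw [ch_eq_zero_of_neg (j := j - 1) (by omega)]
      simp [← h0]
    · -- j ≥ 1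
      obtain ⟨p, hp⟩ : ∃ p : ℕ, j = (p : ℤ) + 1 := ⟨(j - 1).toNat, by omega⟩
      obtain ⟨q, hq⟩ : ∃ q : ℕ, m = q + 1 := ⟨m - 1, by omega⟩
      subst hp hq
      have h1 : ch (q + 1) ((p : ℤ) + 1) = (q + 1).choose (p + 1) := by
        simp [ch]
        congr 1
        omega
      have h2 : ch (q + 1 - 1) ((p : ℤ) + 1 - 1) = q.choose p := by
        simp [ch]
      rw [h1, h2]
      have h3 := congrArg (fun t : ℕ => (t : ℤ)) (Nat.add_one_mul_choose_eq q p)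
      push_cast at h3 ⊢
      linear_combination -h3

lemma hasDerivAt_sum_cos (c : ℤ → ℝ) (s : Finset ℤ) (θ : ℝ) :
    HasDerivAt (fun θ => ∑ k ∈ s, c k * Real.cos (k * θ))
      (∑ k ∈ s, c k * (-(k : ℝ) * Real.sin (k * θ))) θ := by
  apply HasDerivAt.fun_sum
  intro k _
  have h1 : HasDerivAt (fun x : ℝ => (k : ℝ) * x) (k : ℝ) θ := by
    simpa using (hasDerivAt_id θ).const_mul (k : ℝ)
  have h2 := (Real.hasDerivAt_cos ((k : ℝ) * θ)).comp θ h1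
  have := h2.const_mul (c k)
  exact this.congr_deriv (by ring)

lemma hasDerivAt_sum_sin (c : ℤ → ℝ) (s : Finset ℤ) (θ : ℝ) :
    HasDerivAt (fun θ => ∑ k ∈ s, c k * (-(k : ℝ) * Real.sin (k * θ)))
      (∑ k ∈ s, c k * (-(k : ℝ) ^ 2 * Real.cos (k * θ))) θ := by
  apply HasDerivAt.fun_sum
  intro k _
  have h1 : HasDerivAt (fun x : ℝ => (k : ℝ) * x) (k : ℝ) θ := by
    simpa using (hasDerivAt_id θ).const_mul (k : ℝ)
  have h2 := (Real.hasDerivAt_sin ((k : ℝ) * θ)).comp θ h1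
  have := (h2.const_mul (-(k : ℝ))).const_mul (c k)
  exact this.congr_deriv (by ring)

/-- For `m, n ≥ 1`, `C''_{m,n}(θ) = m² C_{m−1,n−1}(θ) − n² C_{m,n}(θ)`. -/
theorem stmt4 (m n : ℕ) (hm : 1 ≤ m) (hn : 1 ≤ n) (θ : ℝ) :
    deriv (deriv (Cfun m n)) θ =
      (m : ℝ) ^ 2 * Cfun (m - 1) (n - 1) θ - (n : ℝ) ^ 2 * Cfun m n θ := by
  set c : ℤ → ℝ := fun k => ((ch m ((n : ℤ) + k) * ch m ((n : ℤ) - k) : ℕ) : ℝ) with hc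
  set s := Finset.Icc (-(m : ℤ)) (m : ℤ) with hs
  have hd1 : deriv (Cfun m n) = fun θ => ∑ k ∈ s, c k * (-(k : ℝ) * Real.sin (k * θ)) := by
    funext x
    exact (hasDerivAt_sum_cos c s x).deriv
  have hd2 : deriv (deriv (Cfun m n)) θ
      = ∑ k ∈ s, c k * (-(k : ℝ) ^ 2 * Real.cos (k * θ)) := by
    rw [hd1]
    exact (hasDerivAt_sum_sin c s θ).deriv
  rw [hd2]
  -- extend RHS small sum to s
  have hsub : Finset.Icc (-((m - 1 : ℕ) : ℤ)) ((m - 1 : ℕ) : ℤ) ⊆ s := by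
    intro k hk
    simp only [hs, Finset.mem_Icc] at hk ⊢
    omega
  have hCsmall : Cfun (m - 1) (n - 1) θ
      = ∑ k ∈ s, ((ch (m-1) (((n-1 : ℕ) : ℤ) + k) * ch (m-1) (((n-1 : ℕ) : ℤ) - k) : ℕ) : ℝ)
          * Real.cos (k * θ) := by
    rw [Cfun]
    apply Finset.sum_subset hsub
    intro k hk hnk
    simp only [hs, Finset.mem_Icc] at hk hnk
    have hkabs : k = (m : ℤ) ∨ k = -(m : ℤ) := by omega
    have e1 : ((m - 1 : ℕ) : ℤ) = (m : ℤ) - 1 := by omega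
    have e2 : ((n - 1 : ℕ) : ℤ) = (n : ℤ) - 1 := by omega
    rcases hkabs with h | h
    · have : ch (m-1) (((n-1 : ℕ) : ℤ) + k) = 0 := by
        apply ch_eq_zero_of_gt; rw [e1, e2, h]; omega
      simp [this]
    · have : ch (m-1) (((n-1 : ℕ) : ℤ) - k) = 0 := by
        apply ch_eq_zero_of_gt; rw [e1, e2, h]; omega
      simp [this]
  rw [hCsmall, Cfun, Finset.mul_sum, Finset.mul_sum, ← Finset.sum_sub_distrib]
  apply Finset.sum_congr rfl
  intro k hk
  -- per-coefficient identity
  have e1 := key m hm ((n : ℤ) + k)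
  have e2 := key m hm ((n : ℤ) - k)
  have hn1 : ((n - 1 : ℕ) : ℤ) = (n : ℤ) - 1 := by omega
  have emain : (-(k : ℝ) ^ 2) * c k
      = (m : ℝ) ^ 2 * ((ch (m-1) (((n-1 : ℕ) : ℤ) + k) * ch (m-1) (((n-1 : ℕ) : ℤ) - k) : ℕ) : ℝ)
        - (n : ℝ) ^ 2 * c k := by
    have eZ : (-(k : ℤ) ^ 2) * (ch m ((n : ℤ) + k) * ch m ((n : ℤ) - k) : ℕ)
        = (m : ℤ) ^ 2 * (ch (m-1) (((n-1 : ℕ) : ℤ) + k) * ch (m-1) (((n-1 : ℕ) : ℤ) - k) : ℕ)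
          - (n : ℤ) ^ 2 * (ch m ((n : ℤ) + k) * ch m ((n : ℤ) - k) : ℕ) := by
      have h12 : ((n : ℤ) + k) * (ch m ((n : ℤ) + k) : ℤ) * (((n : ℤ) - k) * (ch m ((n : ℤ) - k) : ℤ))
          = (m : ℤ) * (ch (m - 1) ((n : ℤ) + k - 1) : ℤ) * ((m : ℤ) * (ch (m - 1) ((n : ℤ) - k - 1) : ℤ)) := by
        rw [e1, e2]
      have ha : ((n-1 : ℕ) : ℤ) + k = (n : ℤ) + k - 1 := by omega
      have hb : ((n-1 : ℕ) : ℤ) - k = (n : ℤ) - k - 1 := by omega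
      rw [ha, hb]
      push_cast
      push_cast at h12
      nlinarith [h12]
    have := congrArg (fun z : ℤ => (z : ℝ)) eZ
    push_cast at this
    rw [hc]
    push_cast
    push_cast at this ⊢
    linarith [this]
  calc c k * (-(k : ℝ) ^ 2 * Real.cos (k * θ))
      = ((-(k : ℝ) ^ 2) * c k) * Real.cos (k * θ) := by ring
    _ = _ := by rw [emain]; ring
end

section
/- For natural numbers n and 0 ≤ j ≤ n, the 2j-th derivative of C_{2n,n}(θ) = Σ_k binom(2n, n+k)² cos(kθ) (note binom(2n,n+k)binom(2n,n−k) = binom(2n,n+k)²) satisfies d^{2j}C_{2n,n}/dθ^{2j} = Σ_{k=0}^{j} (−1)^k ((2n)!/(2n−j+k)!)² Z_{j−k,k}(n) C_{2n−j+k, n−j+k}(θ), where Z_{p,q} are defined by Z_{p,q}(n) = Σ_{0 ≤ d₁ ≤ ⋯ ≤ d_q ≤ p} ∏_i (n−d_i)² (Z_{p,0}=1, Z_{p,q}=0 for p<0 or q<0). -/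
open scoped Classical

/-- `Z_{p,q}(x) = Σ_{0 ≤ d₁ ≤ ⋯ ≤ d_q ≤ p} (x−d₁)²⋯(x−d_q)²`, over weakly
increasing `q`-tuples in `[0,p]`; `Z_{p,0} = 1`. -/
noncomputable def Zfun (p q : ℕ) (x : ℝ) : ℝ :=
  ∑ d ∈ Finset.univ.filter (fun d : Fin q → Fin (p + 1) => Monotone d),
    ∏ i, (x - ((d i : ℕ) : ℝ)) ^ 2

lemma Zfun_q_zero (p : ℕ) (x : ℝ) : Zfun p 0 x = 1 := by
  unfold Zfun
  have hf : (Finset.univ.filter (fun d : Fin 0 → Fin (p + 1) => Monotone d)) = Finset.univ :=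
    Finset.filter_true_of_mem (fun d _ => Subsingleton.monotone d)
  rw [hf]; simp

lemma Zfun_p_zero (q : ℕ) (x : ℝ) : Zfun 0 q x = (x ^ 2) ^ q := by
  unfold Zfun
  have hf : (Finset.univ.filter (fun d : Fin q → Fin (0 + 1) => Monotone d)) = Finset.univ :=
    Finset.filter_true_of_mem
      (fun d _ a b _ => le_of_eq ((Fin.eq_zero _).trans (Fin.eq_zero _).symm))
  rw [hf]
  have h : ∀ d : Fin q → Fin (0 + 1), ∏ i, (x - ((d i : ℕ) : ℝ)) ^ 2 = (x ^ 2) ^ q := by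
    intro d
    have h0 : ∀ i, ((d i : ℕ) : ℝ) = 0 := by intro i; simp [Fin.eq_zero (d i)]
    simp [h0]
  rw [Finset.sum_congr rfl (fun d _ => h d), Finset.sum_const]
  simp

lemma Zfun_split (p q : ℕ) (x : ℝ) :
    Zfun (p+1) (q+1) x = Zfun p (q+1) x + (x - ((p:ℝ)+1))^2 * Zfun (p+1) q x := by
  unfold Zfun
  rw [← Finset.sum_filter_add_sum_filter_not
      (Finset.univ.filter (fun d : Fin (q+1) → Fin (p+1+1) => Monotone d))
      (fun d => d (Fin.last q) = Fin.last (p+1))]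
  rw [add_comm]
  congr 1
  · refine Finset.sum_bij'
      (i := fun (d : Fin (q+1) → Fin (p+1+1)) (hd : d ∈ _) =>
        (fun i => Fin.castLT (d i) (by
          simp only [Finset.mem_filter, Finset.mem_univ, true_and] at hd
          have h1 : d i ≤ d (Fin.last q) := hd.1 (Fin.le_last i)
          have h2 : d (Fin.last q) < Fin.last (p+1) := Fin.lt_last_iff_ne_last.mpr hd.2
          exact lt_of_le_of_lt h1 h2) : Fin (q+1) → Fin (p+1)))
      (j := fun (e : Fin (q+1) → Fin (p+1)) (he : e ∈ _) => fun i => Fin.castSucc (e i))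
      ?_ ?_ ?_ ?_ ?_
    · intro d hd
      simp only [Finset.mem_filter, Finset.mem_univ, true_and] at hd ⊢
      intro a b hab
      exact hd.1 hab
    · intro e he
      simp only [Finset.mem_filter, Finset.mem_univ, true_and] at he ⊢
      constructor
      · exact fun a b hab => Fin.castSucc_le_castSucc_iff.mpr (he hab)
      · exact Fin.ne_last_of_lt (Fin.castSucc_lt_last _)
    · intro d hd; funext i; exact Fin.ext rfl
    · intro e he; funext i; exact Fin.ext rfl
    · intro d hd; rfl
  · rw [Finset.mul_sum]
    refine Finset.sum_bij'
      (i := fun (d : Fin (q+1) → Fin (p+1+1)) (hd : d ∈ _) =>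
        (fun i => d (Fin.castSucc i) : Fin q → Fin (p+1+1)))
      (j := fun (e : Fin q → Fin (p+1+1)) (he : e ∈ _) =>
        Fin.snoc e (Fin.last (p+1)))
      ?_ ?_ ?_ ?_ ?_
    · intro d hd
      simp only [Finset.mem_filter, Finset.mem_univ, true_and] at hd ⊢
      exact fun a b hab => hd.1 (Fin.castSucc_le_castSucc_iff.mpr hab)
    · intro e he
      simp only [Finset.mem_filter, Finset.mem_univ, true_and] at he ⊢
      refine ⟨?_, ?_⟩
      · intro a b hab
        induction b using Fin.lastCases with
        | last => rw [Fin.snoc_last]; exact Fin.le_last _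
        | cast b' =>
          induction a using Fin.lastCases with
          | last => exact absurd hab (not_le.mpr (Fin.castSucc_lt_last b'))
          | cast a' =>
            rw [Fin.snoc_castSucc, Fin.snoc_castSucc]
            exact he (Fin.castSucc_le_castSucc_iff.mp hab)
      · exact Fin.snoc_last _ _
    · intro d hd
      simp only [Finset.mem_filter, Finset.mem_univ, true_and] at hd
      funext i
      induction i using Fin.lastCases with
      | last => simp only [Fin.snoc_last]; exact hd.2.symm
      | cast i' => simp only [Fin.snoc_castSucc]
    · intro e he; funext i; simp only [Fin.snoc_castSucc]
    · intro d hd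
      simp only [Finset.mem_filter, Finset.mem_univ, true_and] at hd
      rw [Fin.prod_univ_castSucc, hd.2, mul_comm]
      congr 1
      have : ((Fin.last (p+1) : Fin (p+1+1)) : ℕ) = p + 1 := rfl
      rw [this]
      push_cast
      ring

noncomputable def Dfun (m n : ℕ) : ℝ → ℝ := fun θ =>
  ∑ k ∈ Finset.Icc (-(m : ℤ)) (m : ℤ),
    ((ch m ((n : ℤ) + k) * ch m ((n : ℤ) - k) : ℕ) : ℝ) * (-(k:ℝ) * Real.sin (k * θ))

noncomputable def D2fun (m n : ℕ) : ℝ → ℝ := fun θ =>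
  ∑ k ∈ Finset.Icc (-(m : ℤ)) (m : ℤ),
    ((ch m ((n : ℤ) + k) * ch m ((n : ℤ) - k) : ℕ) : ℝ) * (-(k:ℝ)^2 * Real.cos (k * θ))

lemma hasDerivAt_Cfun (m n : ℕ) (θ : ℝ) : HasDerivAt (Cfun m n) (Dfun m n θ) θ := by
  unfold Cfun Dfun
  apply HasDerivAt.fun_sum
  intro k _
  have h1 : HasDerivAt (fun θ : ℝ => (k:ℝ) * θ) (k:ℝ) θ := by
    simpa using (hasDerivAt_id θ).const_mul (k:ℝ)
  have h3 := h1.cos.const_mul ((ch m ((n : ℤ) + k) * ch m ((n : ℤ) - k) : ℕ) : ℝ)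
  convert h3 using 1
  · rfl
  · ring

lemma hasDerivAt_Dfun (m n : ℕ) (θ : ℝ) : HasDerivAt (Dfun m n) (D2fun m n θ) θ := by
  unfold Dfun D2fun
  apply HasDerivAt.fun_sum
  intro k _
  have h1 : HasDerivAt (fun θ : ℝ => (k:ℝ) * θ) (k:ℝ) θ := by
    simpa using (hasDerivAt_id θ).const_mul (k:ℝ)
  have h2 := (h1.sin.const_mul (-(k:ℝ))).const_mul
    ((ch m ((n : ℤ) + k) * ch m ((n : ℤ) - k) : ℕ) : ℝ)
  convert h2 using 1
  · rfl
  · ring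

lemma ch_neg (m : ℕ) {j : ℤ} (h : j < 0) : ch m j = 0 := by
  simp [ch, not_le.mpr h]

lemma ch_gt (m : ℕ) {j : ℤ} (h : (m:ℤ) < j) : ch m j = 0 := by
  unfold ch
  split
  · exact Nat.choose_eq_zero_of_lt (by omega)
  · rfl

lemma ch_mul (m : ℕ) (j : ℤ) :
    ((m:ℝ) + 1) * (ch m (j - 1) : ℝ) = (ch (m+1) j : ℝ) * (j : ℝ) := by
  rcases lt_trichotomy j 0 with h | h | h
  · rw [ch_neg m (by omega), ch_neg (m+1) h]
    simp
  · subst h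
    rw [ch_neg m (by omega)]
    simp
  · obtain ⟨t, rfl⟩ : ∃ t : ℕ, j = (t : ℤ) + 1 := ⟨(j - 1).toNat, by omega⟩
    have h1 : ch m ((t:ℤ) + 1 - 1) = m.choose t := by simp [ch]
    have h2 : ch (m+1) ((t:ℤ) + 1) = (m+1).choose (t+1) := by
      have ht : ((t:ℤ) + 1).toNat = t + 1 := by omega
      unfold ch
      rw [if_pos (by omega : (0:ℤ) ≤ (t:ℤ) + 1), ht]
    rw [h1, h2]
    have key : (m + 1) * m.choose t = (m+1).choose (t+1) * (t+1) := by
      simpa [Nat.succ_eq_add_one] using Nat.add_one_mul_choose_eq m t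
    have := congrArg (fun z : ℕ => (z : ℝ)) key
    push_cast at this
    push_cast
    linarith [this]

lemma key_id (m n : ℕ) (k : ℤ) :
    ((m:ℝ)+1)^2 * ((ch m ((n:ℤ) + k) * ch m ((n:ℤ) - k) : ℕ) : ℝ)
      = (((n:ℝ)+1)^2 - (k:ℝ)^2) *
        ((ch (m+1) (((n+1:ℕ):ℤ) + k) * ch (m+1) (((n+1:ℕ):ℤ) - k) : ℕ) : ℝ) := by
  have e1 := ch_mul m ((n:ℤ) + 1 + k)
  rw [show (n:ℤ) + 1 + k - 1 = (n:ℤ) + k by ring] at e1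
  have e2 := ch_mul m ((n:ℤ) + 1 - k)
  rw [show (n:ℤ) + 1 - k - 1 = (n:ℤ) - k by ring] at e2
  push_cast at e1 e2 ⊢
  linear_combination (((m:ℝ)+1) * ((ch m ((n:ℤ) - k) : ℕ) : ℝ)) * e1
    + (((ch (m+1) ((n:ℤ)+1+k) : ℕ) : ℝ) * ((n:ℝ)+1+(k:ℝ))) * e2

lemma D2_eq (m n : ℕ) (θ : ℝ) :
    D2fun (m+1) (n+1) θ
      = ((m:ℝ)+1)^2 * Cfun m n θ - ((n:ℝ)+1)^2 * Cfun (m+1) (n+1) θ := by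
  unfold D2fun Cfun
  have hsub : Finset.Icc (-(m:ℤ)) (m:ℤ) ⊆ Finset.Icc (-((m+1:ℕ):ℤ)) ((m+1:ℕ):ℤ) := by
    intro k hk
    simp only [Finset.mem_Icc] at *
    push_cast
    omega
  have hext : ∑ k ∈ Finset.Icc (-(m:ℤ)) (m:ℤ),
        ((ch m ((n:ℤ) + k) * ch m ((n:ℤ) - k) : ℕ) : ℝ) * Real.cos (k * θ)
      = ∑ k ∈ Finset.Icc (-((m+1:ℕ):ℤ)) ((m+1:ℕ):ℤ),
        ((ch m ((n:ℤ) + k) * ch m ((n:ℤ) - k) : ℕ) : ℝ) * Real.cos (k * θ) := by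
    apply Finset.sum_subset hsub
    intro k hk hk'
    simp only [Finset.mem_Icc] at hk hk'
    push_cast at hk
    have : k = (m:ℤ) + 1 ∨ k = -((m:ℤ) + 1) := by omega
    rcases this with h | h
    · rw [ch_gt m (by omega : (m:ℤ) < (n:ℤ) + k)]
      simp
    · rw [ch_gt m (by omega : (m:ℤ) < (n:ℤ) - k)]
      simp
  rw [hext, Finset.mul_sum, Finset.mul_sum, ← Finset.sum_sub_distrib]
  apply Finset.sum_congr rfl
  intro k _
  have h := key_id m n k
  push_cast at h ⊢
  linear_combination (-Real.cos ((k:ℝ)*θ)) * h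

noncomputable def coef (n j k : ℕ) : ℝ :=
  (-1 : ℝ) ^ k * (((2 * n).factorial : ℝ) / ((2 * n - j + k).factorial : ℝ)) ^ 2 *
    Zfun (j - k) k (n : ℝ)

lemma fact_step (N s : ℕ) :
    ((N.factorial : ℝ) / ((s+1).factorial : ℝ)) * ((s:ℝ)+1)
      = (N.factorial : ℝ) / (s.factorial : ℝ) := by
  rw [Nat.factorial_succ]
  have h1 : (s.factorial : ℝ) ≠ 0 := Nat.cast_ne_zero.mpr s.factorial_ne_zero
  push_cast
  field_simp

lemma coef_zero (n j : ℕ) (hj : j + 1 ≤ n) :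
    coef n (j+1) 0 = coef n j 0 * ((2*n - j : ℕ) : ℝ)^2 := by
  unfold coef
  rw [Zfun_q_zero, Zfun_q_zero]
  simp only [Nat.add_zero]
  have hs : 2*n - j = (2*n - (j+1)) + 1 := by omega
  rw [hs, ← fact_step (2*n) (2*n - (j+1))]
  push_cast
  ring

lemma coef_last (n j : ℕ) (hj : j + 1 ≤ n) :
    coef n (j+1) (j+1) = -(coef n j j * ((n - (j+1) + (j+1) : ℕ) : ℝ)^2) := by
  unfold coef
  have h1 : 2*n - (j+1) + (j+1) = 2*n := by omega
  have h2 : 2*n - j + j = 2*n := by omega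
  have h3 : j + 1 - (j+1) = 0 := by omega
  have h4 : j - j = 0 := by omega
  have h5 : n - (j+1) + (j+1) = n := by omega
  rw [h1, h2, h3, h4, h5, Zfun_p_zero, Zfun_p_zero]
  ring

lemma coef_mid (n j k' : ℕ) (hj : j + 1 ≤ n) (hk : k' + 1 ≤ j) :
    coef n (j+1) (k'+1)
      = coef n j (k'+1) * ((2*n - j + (k'+1) : ℕ) : ℝ)^2
        - coef n j k' * ((n - (j+1) + (k'+1) : ℕ) : ℝ)^2 := by
  unfold coef
  have e1 : j + 1 - (k'+1) = j - k' := by omega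
  have e2 : 2*n - j + (k'+1) = (2*n - (j+1) + (k'+1)) + 1 := by omega
  have e3 : 2*n - j + k' = 2*n - (j+1) + (k'+1) := by omega
  have e4 : j - k' = (j - (k'+1)) + 1 := by omega
  rw [e1, e2, e3, e4]
  rw [Zfun_split (j - (k'+1)) k' (n:ℝ)]
  have e5 : ((n - (j+1) + (k'+1) : ℕ) : ℝ) = (n:ℝ) - ((j - (k'+1) : ℕ) : ℝ) - 1 := by
    have h : (n - (j+1) + (k'+1)) + (j - (k'+1)) + 1 = n := by omega
    have hc := congrArg (fun z : ℕ => (z:ℝ)) h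
    push_cast at hc ⊢
    linarith
  rw [← fact_step (2*n) (2*n - (j+1) + (k'+1))]
  rw [e5]
  push_cast
  ring

lemma main (n : ℕ) : ∀ j, j ≤ n → ∀ θ : ℝ,
    iteratedDeriv (2*j) (Cfun (2*n) n) θ
      = ∑ k ∈ Finset.range (j+1), coef n j k * Cfun (2*n - j + k) (n - j + k) θ := by
  intro j
  induction j with
  | zero =>
    intro _ θ
    have h0 : (2 * 0 : ℕ) = 0 := rfl
    rw [h0, iteratedDeriv_zero, Finset.sum_range_one]
    unfold coef
    rw [Zfun_q_zero]
    simp only [Nat.sub_zero, Nat.add_zero, pow_zero, one_mul, mul_one]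
    rw [div_self (Nat.cast_ne_zero.mpr (2*n).factorial_ne_zero)]
    norm_num
  | succ j ih =>
    intro hj θ
    have IH : iteratedDeriv (2*j) (Cfun (2*n) n)
        = fun x => ∑ k ∈ Finset.range (j+1), coef n j k * Cfun (2*n - j + k) (n - j + k) x :=
      funext (fun x => ih (by omega) x)
    have h2 : 2*(j+1) = 2*j + 1 + 1 := by ring
    rw [h2, iteratedDeriv_succ, iteratedDeriv_succ, IH]
    have hd1 : deriv (fun x => ∑ k ∈ Finset.range (j+1),
          coef n j k * Cfun (2*n - j + k) (n - j + k) x)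
        = fun x => ∑ k ∈ Finset.range (j+1),
          coef n j k * Dfun (2*n - j + k) (n - j + k) x := by
      funext x
      exact (HasDerivAt.fun_sum (fun k _ =>
        (hasDerivAt_Cfun (2*n - j + k) (n - j + k) x).const_mul (coef n j k))).deriv
    rw [hd1]
    have hd2 : deriv (fun x => ∑ k ∈ Finset.range (j+1),
          coef n j k * Dfun (2*n - j + k) (n - j + k) x) θ
        = ∑ k ∈ Finset.range (j+1), coef n j k * D2fun (2*n - j + k) (n - j + k) θ :=
      (HasDerivAt.fun_sum (fun k _ =>
        (hasDerivAt_Dfun (2*n - j + k) (n - j + k) θ).const_mul (coef n j k))).deriv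
    rw [hd2]
    have hterm : ∀ k ∈ Finset.range (j+1),
        coef n j k * D2fun (2*n - j + k) (n - j + k) θ
          = (coef n j k * ((2*n - j + k : ℕ) : ℝ)^2)
              * Cfun (2*n - (j+1) + k) (n - (j+1) + k) θ
            - (coef n j ((k+1)-1) * ((n - (j+1) + (k+1) : ℕ) : ℝ)^2)
              * Cfun (2*n - (j+1) + (k+1)) (n - (j+1) + (k+1)) θ := by
      intro k hk
      simp only [Finset.mem_range] at hk
      simp only [Nat.add_sub_cancel]
      have hm2 : 2*n - (j+1) + (k+1) = 2*n - j + k := by omega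
      have hn2 : n - (j+1) + (k+1) = n - j + k := by omega
      have hm : 2*n - j + k = (2*n - (j+1) + k) + 1 := by omega
      have hn : n - j + k = (n - (j+1) + k) + 1 := by omega
      rw [hm2, hn2, hm, hn, D2_eq (2*n - (j+1) + k) (n - (j+1) + k) θ]
      push_cast
      ring
    rw [Finset.sum_congr rfl hterm]
    have final : ∀ (G u v c' : ℕ → ℝ), (c' 0 = u 0) →
        (∀ k, 1 ≤ k → k ≤ j → c' k = u k - v k) → (c' (j+1) = - v (j+1)) →
        ∑ k ∈ Finset.range (j+1), (u k * G k - v (k+1) * G (k+1))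
          = ∑ k ∈ Finset.range (j+1+1), c' k * G k := by
      intro G u v c' h0 hm hl
      have key : ∑ k ∈ Finset.range (j+2),
          (c' k * G k - (u k * G k - v k * G k)) = v 0 * G 0 - u (j+1) * G (j+1) := by
        rw [Finset.sum_range_succ]
        have hlast : c' (j+1) * G (j+1) - (u (j+1) * G (j+1) - v (j+1) * G (j+1))
            = - (u (j+1) * G (j+1)) := by rw [hl]; ring
        have hrest : ∑ k ∈ Finset.range (j+1),
            (c' k * G k - (u k * G k - v k * G k)) = v 0 * G 0 := by
          rw [Finset.sum_eq_single_of_mem 0 (Finset.mem_range.mpr (by omega))]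
          · rw [h0]; ring
          · intro k hk hk0
            simp only [Finset.mem_range] at hk
            rw [hm k (by omega) (by omega)]
            ring
        rw [hlast, hrest]
        ring
      have k1 : ∑ k ∈ Finset.range (j+2), (c' k * G k - (u k * G k - v k * G k))
          = ∑ k ∈ Finset.range (j+2), c' k * G k
            - (∑ k ∈ Finset.range (j+2), u k * G k
              - ∑ k ∈ Finset.range (j+2), v k * G k) := by
        rw [Finset.sum_sub_distrib, Finset.sum_sub_distrib]
      have k2 := Finset.sum_range_succ (fun k => u k * G k) (j+1)
      have k3 := Finset.sum_range_succ' (fun k => v k * G k) (j+1)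
      have k4 := Finset.sum_sub_distrib (s := Finset.range (j+1))
        (f := fun k => u k * G k) (g := fun k => v (k+1) * G (k+1))
      rw [k4]
      linarith [key, k1, k2, k3]
    exact final
      (fun k => Cfun (2*n - (j+1) + k) (n - (j+1) + k) θ)
      (fun k => coef n j k * ((2*n - j + k : ℕ) : ℝ)^2)
      (fun k => coef n j (k-1) * ((n - (j+1) + k : ℕ) : ℝ)^2)
      (fun k => coef n (j+1) k)
      (by simpa using coef_zero n j hj)
      (by
        intro k h1 h2
        obtain ⟨k', rfl⟩ : ∃ k', k = k' + 1 := ⟨k - 1, by omega⟩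
        simpa using coef_mid n j k' hj (by omega))
      (by simpa using coef_last n j hj)


/-- for `0 ≤ j ≤ n`,
`d^{2j}C_{2n,n}/dθ^{2j} = Σ_{k=0}^{j} (−1)^k ((2n)!/(2n−j+k)!)² Z_{j−k,k}(n) C_{2n−j+k,n−j+k}(θ)`. -/
theorem stmt17 (n j : ℕ) (hj : j ≤ n) (θ : ℝ) :
    iteratedDeriv (2 * j) (Cfun (2 * n) n) θ =
      ∑ k ∈ Finset.range (j + 1),
        (-1 : ℝ) ^ k * (((2 * n).factorial : ℝ) / ((2 * n - j + k).factorial : ℝ)) ^ 2 *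
          Zfun (j - k) k (n : ℝ) * Cfun (2 * n - j + k) (n - j + k) θ := by
  exact main n j hj θ
end
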